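/- In a linear regression model with uncorrelated features, the XPER contribution of feature x_j to the R² performance metric is φ_j = 2·β̂_j·σ_{y,x_j}/σ_y², where σ_{y,x_j} is the covariance of y with x_j and σ_y² the variance of y. -/

import Mathlib

open MeasureTheory Finset Nat

/-- Covariance of two real random variables. -/
noncomputable def cov {Ω : Type*} [MeasurableSpace Ω] (μ : Measure Ω) (f g : Ω → ℝ) : ℝ :=
  ∫ ω, (f ω - ∫ ω', f ω' ∂μ) * (g ω - ∫ ω', g ω' ∂μ) ∂μ

/-- Variance of a real random variable. -/
noncomputable def var {Ω : Type*} [MeasurableSpace Ω] (μ : Measure Ω) (f : Ω → ℝ) : ℝ :=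
  cov μ f f

/-- Shapley coalition weight. -/
noncomputable def shapleyWeight (q : ℕ) (S : Finset (Fin q)) : ℝ :=
  ((S.card ! * (q - S.card - 1)! : ℕ) : ℝ) / (q ! : ℝ)

/-- The XPER value of feature `j` for the performance metric with individual contribution
`G(y; x)`: a Shapley-weighted sum, over coalitions `S` of the remaining features, of the
difference between the iterated expectation of `G` with `x_j` included in the coalition and
the one with `x_j` excluded.  Excluded features are marginalised out using an independent
copy of the feature vector (second coordinate of the product measure). -/
noncomputable def xper {Ω : Type*} [MeasurableSpace Ω] (μ : Measure Ω) (q : ℕ)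
    (y : Ω → ℝ) (x : Fin q → Ω → ℝ) (G : ℝ → (Fin q → ℝ) → ℝ) (j : Fin q) : ℝ :=
  ∑ S ∈ (Finset.univ.erase j).powerset, shapleyWeight q S *
    ((∫ p : Ω × Ω, G (y p.1) (fun k => if k ∈ insert j S then x k p.1 else x k p.2)
        ∂(μ.prod μ)) -
     (∫ p : Ω × Ω, G (y p.1) (fun k => if k ∈ S then x k p.1 else x k p.2)
        ∂(μ.prod μ)))

section Aux
variable {Ω : Type*} [MeasurableSpace Ω] {μ : Measure Ω}

lemma integrable_mul_of_memL2 (f g : Ω → ℝ) (hf : MemLp f 2 μ) (hg : MemLp g 2 μ) :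
    Integrable (fun ω => f ω * g ω) μ := by
  have h : MemLp (g • f) 1 μ := hf.smul hg
  rw [← memLp_one_iff_integrable]
  have h' : (fun ω => f ω * g ω) = g • f := by funext ω; simp [mul_comm]
  rw [h']; exact h

lemma cov_eq_sub [IsProbabilityMeasure μ] {f g : Ω → ℝ} (hf : MemLp f 2 μ) (hg : MemLp g 2 μ) :
    cov μ f g = (∫ ω, f ω * g ω ∂μ) - (∫ ω, f ω ∂μ) * ∫ ω, g ω ∂μ := by
  have hfi := hf.integrable one_le_two
  have hgi := hg.integrable one_le_two
  have hfg := integrable_mul_of_memL2 f g hf hg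
  rw [cov]
  set a := ∫ ω, f ω ∂μ with ha
  set b := ∫ ω, g ω ∂μ with hb
  have h : ∀ ω, (f ω - a) * (g ω - b) = f ω * g ω - b * f ω - (a * g ω - a * b) := by
    intro ω; ring
  simp_rw [h]
  have h1 : Integrable (fun ω => f ω * g ω - b * f ω) μ := hfg.sub (hfi.const_mul b)
  have h2 : Integrable (fun ω => a * g ω - a * b) μ := (hgi.const_mul a).sub (integrable_const _)
  rw [integral_sub h1 h2, integral_sub hfg (hfi.const_mul b),
    integral_sub (hgi.const_mul a) (integrable_const _),
    integral_const_mul, integral_const_mul, integral_const]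
  simp
  ring

end Aux

lemma shapley_sum (q : ℕ) (j : Fin q) :
    ∑ S ∈ (Finset.univ.erase j).powerset, shapleyWeight q S = 1 := by
  classical
  have hq : 0 < q := j.pos
  have hcard : (Finset.univ.erase j).card = q - 1 := by
    rw [Finset.card_erase_of_mem (Finset.mem_univ j), Finset.card_fin]
  rw [Finset.powerset_card_disjiUnion]
  refine Eq.trans (Finset.sum_disjiUnion _ _ _) ?_
  have h1 : ∀ i ∈ range ((Finset.univ.erase j).card + 1),
      ∑ S ∈ Finset.powersetCard i (Finset.univ.erase j), shapleyWeight q S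
        = ((q-1)! : ℝ) / (q ! : ℝ) := by
    intro i hi
    rw [hcard] at hi
    have hile : i ≤ q - 1 := by have := mem_range.1 hi; omega
    have hval : ∀ S ∈ Finset.powersetCard i (Finset.univ.erase j),
        shapleyWeight q S = ((i ! * (q - i - 1)! : ℕ) : ℝ) / (q ! : ℝ) := by
      intro S hS
      rw [shapleyWeight, (Finset.mem_powersetCard.1 hS).2]
    rw [Finset.sum_congr rfl hval, Finset.sum_const, Finset.card_powersetCard, hcard,
      nsmul_eq_mul]
    have hqi : q - i - 1 = q - 1 - i := by omega
    rw [hqi]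
    have hfac := Nat.choose_mul_factorial_mul_factorial hile
    have hnum : ((q-1).choose i : ℝ) * ((i ! * (q - 1 - i)! : ℕ) : ℝ) = ((q-1)! : ℝ) := by
      rw [← hfac]; push_cast; ring
    rw [← mul_div_assoc, hnum]
  rw [Finset.sum_congr rfl h1, Finset.sum_const, Finset.card_range, hcard, nsmul_eq_mul]
  have hq1 : q - 1 + 1 = q := by omega
  rw [hq1]
  have hfact : (q : ℝ) * ((q-1)! : ℝ) = (q ! : ℝ) := by
    rw [← Nat.cast_mul, Nat.mul_factorial_pred hq.ne']
  have hne : (q ! : ℝ) ≠ 0 := Nat.cast_ne_zero.2 (Nat.factorial_ne_zero q)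
  field_simp
  linarith [hfact]


/-- In a linear regression model `f̂(x) = ∑ β̂_k x_k` with mutually uncorrelated features,
the XPER contribution of feature `x_j` to the `R²` performance metric is
`φ_j = 2 β̂_j σ_{y,x_j} / σ_y²`. -/
theorem xper_R2_linear_regression {Ω : Type*} [MeasurableSpace Ω] (μ : Measure Ω)
    [IsProbabilityMeasure μ] (q : ℕ) (y : Ω → ℝ) (x : Fin q → Ω → ℝ) (β : Fin q → ℝ)
    (j : Fin q)
    (hy : MemLp y 2 μ) (hx : ∀ k, MemLp (x k) 2 μ)
    (huncorr : ∀ k l, k ≠ l → cov μ (x k) (x l) = 0)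
    (hvar : var μ y ≠ 0) :
    xper μ q y x (fun yv xv => 1 - (yv - ∑ k, β k * xv k) ^ 2 / var μ y) j
      = 2 * β j * cov μ y (x j) / var μ y := by
  classical
  have hxi : ∀ k, Integrable (x k) μ := fun k => (hx k).integrable one_le_two
  have hyi : Integrable y μ := hy.integrable one_le_two
  -- measure preserving projections
  have hmpfst : MeasurePreserving (Prod.fst : Ω × Ω → Ω) (μ.prod μ) μ :=
    ⟨measurable_fst, by simp⟩
  have hmpsnd : MeasurePreserving (Prod.snd : Ω × Ω → Ω) (μ.prod μ) μ :=
    ⟨measurable_snd, by simp⟩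
  have hLfst : ∀ (f : Ω → ℝ), MemLp f 2 μ → MemLp (fun p : Ω × Ω => f p.1) 2 (μ.prod μ) :=
    fun f hf => hf.comp_measurePreserving hmpfst
  have hLsnd : ∀ (f : Ω → ℝ), MemLp f 2 μ → MemLp (fun p : Ω × Ω => f p.2) 2 (μ.prod μ) :=
    fun f hf => hf.comp_measurePreserving hmpsnd
  have hfst_int : ∀ f : Ω → ℝ, ∫ p : Ω × Ω, f p.1 ∂(μ.prod μ) = ∫ ω, f ω ∂μ := by
    intro f
    have := integral_prod_mul (μ := μ) (ν := μ) f (fun _ => (1 : ℝ))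
    simpa using this
  have hsnd_int : ∀ f : Ω → ℝ, ∫ p : Ω × Ω, f p.2 ∂(μ.prod μ) = ∫ ω, f ω ∂μ := by
    intro f
    have := integral_prod_mul (μ := μ) (ν := μ) (fun _ => (1 : ℝ)) f
    simpa using this
  set σ2 := var μ y with hσ2
  have key : ∀ S ∈ (Finset.univ.erase j).powerset,
      ((∫ p : Ω × Ω, (1 - (y p.1 -
            ∑ k, β k * (if k ∈ insert j S then x k p.1 else x k p.2)) ^ 2 / σ2) ∂(μ.prod μ)) -
       (∫ p : Ω × Ω, (1 - (y p.1 -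
            ∑ k, β k * (if k ∈ S then x k p.1 else x k p.2)) ^ 2 / σ2) ∂(μ.prod μ)))
      = 2 * β j * cov μ y (x j) / σ2 := by
    intro S hS
    have hSsub : S ⊆ Finset.univ.erase j := Finset.mem_powerset.1 hS
    have hjS : j ∉ S := fun h => (Finset.mem_erase.1 (hSsub h)).1 rfl
    have hjD : j ∉ (Finset.univ.erase j) \ S := fun h =>
      (Finset.mem_erase.1 (Finset.mem_sdiff.1 h).1).1 rfl
    set u : Ω → ℝ := fun ω => y ω - ∑ k ∈ S, β k * x k ω with hu
    set w : Ω → ℝ := fun ω => ∑ k ∈ (Finset.univ.erase j) \ S, β k * x k ω with hw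
    have hu2 : MemLp u 2 μ := by
      rw [hu]; exact hy.sub (memLp_finset_sum S fun k _ => (hx k).const_mul (β k))
    have hw2 : MemLp w 2 μ := by
      rw [hw]; exact memLp_finset_sum _ fun k _ => (hx k).const_mul (β k)
    have hcomplS : Sᶜ = insert j ((Finset.univ.erase j) \ S) := by
      ext k; by_cases hk : k = j <;> simp [hk, hjS]
    have hcomplT : (insert j S)ᶜ = (Finset.univ.erase j) \ S := by
      ext k; by_cases hk : k = j <;> simp [hk]
    have hsplit : ∀ (T : Finset (Fin q)) (p : Ω × Ω),
        ∑ k, β k * (if k ∈ T then x k p.1 else x k p.2)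
          = (∑ k ∈ T, β k * x k p.1) + ∑ k ∈ Tᶜ, β k * x k p.2 := by
      intro T p
      rw [← Finset.sum_add_sum_compl T]
      congr 1
      · exact Finset.sum_congr rfl fun k hk => by rw [if_pos hk]
      · exact Finset.sum_congr rfl fun k hk => by rw [if_neg (Finset.mem_compl.1 hk)]
    have hFS : ∀ p : Ω × Ω,
        y p.1 - ∑ k, β k * (if k ∈ S then x k p.1 else x k p.2)
          = u p.1 - β j * x j p.2 - w p.2 := by
      intro p
      rw [hsplit S p, hcomplS, Finset.sum_insert hjD]
      simp only [hu, hw]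
      ring
    have hFT : ∀ p : Ω × Ω,
        y p.1 - ∑ k, β k * (if k ∈ insert j S then x k p.1 else x k p.2)
          = u p.1 - β j * x j p.1 - w p.2 := by
      intro p
      rw [hsplit _ p, hcomplT, Finset.sum_insert hjS]
      simp only [hu, hw]
      ring
    -- integrability of squares over the product
    have hF2 : ∀ T : Finset (Fin q),
        MemLp (fun p : Ω × Ω =>
          y p.1 - ∑ k, β k * (if k ∈ T then x k p.1 else x k p.2)) 2 (μ.prod μ) := by
      intro T
      have hsum : MemLp (fun p : Ω × Ω =>
          ∑ k, β k * (if k ∈ T then x k p.1 else x k p.2)) 2 (μ.prod μ) := by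
        apply memLp_finset_sum
        intro k _
        by_cases hk : k ∈ T
        · simpa [hk] using (hLfst (x k) (hx k)).const_mul (β k)
        · simpa [hk] using (hLsnd (x k) (hx k)).const_mul (β k)
      exact (hLfst y hy).sub hsum
    have hFsqInt : ∀ T : Finset (Fin q),
        Integrable (fun p : Ω × Ω =>
          (y p.1 - ∑ k, β k * (if k ∈ T then x k p.1 else x k p.2)) ^ 2) (μ.prod μ) :=
      fun T => (hF2 T).integrable_sq
    have hInt : ∀ T : Finset (Fin q),
        ∫ p : Ω × Ω, (1 - (y p.1 -
            ∑ k, β k * (if k ∈ T then x k p.1 else x k p.2)) ^ 2 / σ2) ∂(μ.prod μ)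
        = 1 - (∫ p : Ω × Ω, (y p.1 -
            ∑ k, β k * (if k ∈ T then x k p.1 else x k p.2)) ^ 2 ∂(μ.prod μ)) / σ2 := by
      intro T
      rw [integral_sub (integrable_const 1) ((hFsqInt T).div_const σ2), integral_const,
        integral_div]
      simp
    rw [hInt (insert j S), hInt S]
    have harith : ∀ a b : ℝ, (1 - a / σ2) - (1 - b / σ2) = (b - a) / σ2 := by
      intro a b; rw [sub_div]; ring
    rw [harith]
    congr 1
    rw [← integral_sub (hFsqInt S) (hFsqInt (insert j S))]
    -- auxiliary abstract functions
    obtain ⟨F1, hF1⟩ : ∃ F1 : Ω → ℝ, F1 = fun ω => u ω * x j ω := ⟨_, rfl⟩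
    obtain ⟨F3, hF3⟩ : ∃ F3 : Ω → ℝ, F3 = fun ω => x j ω ^ 2 := ⟨_, rfl⟩
    obtain ⟨F6, hF6⟩ : ∃ F6 : Ω → ℝ, F6 = fun ω => w ω * x j ω := ⟨_, rfl⟩
    have hexp : (fun p : Ω × Ω =>
        (y p.1 - ∑ k, β k * (if k ∈ S then x k p.1 else x k p.2)) ^ 2 -
        (y p.1 - ∑ k, β k * (if k ∈ insert j S then x k p.1 else x k p.2)) ^ 2)
        = fun p : Ω × Ω =>
          (2 * β j) * F1 p.1 - (2 * β j) * (u p.1 * x j p.2)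
          - (β j ^ 2) * F3 p.1 + (β j ^ 2) * F3 p.2
          - (2 * β j) * (x j p.1 * w p.2) + (2 * β j) * F6 p.2 := by
      funext p
      rw [hFS p, hFT p]
      simp only [hF1, hF3, hF6]
      ring
    rw [hexp]
    -- integrability of the six pieces
    have hmul : ∀ (f g : Ω → ℝ), MemLp f 2 μ → MemLp g 2 μ →
        Integrable (fun ω => f ω * g ω) μ := fun f g hf hg => integrable_mul_of_memL2 f g hf hg
    have hI1 : Integrable F1 μ := by rw [hF1]; exact hmul _ _ hu2 (hx j)
    have hI3 : Integrable F3 μ := by rw [hF3]; exact (hx j).integrable_sq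
    have hI6 : Integrable F6 μ := by rw [hF6]; exact hmul _ _ hw2 (hx j)
    have hui : Integrable u μ := hu2.integrable one_le_two
    have hwi : Integrable w μ := hw2.integrable one_le_two
    have c1 : Integrable (fun p : Ω × Ω => (2 * β j) * F1 p.1) (μ.prod μ) :=
      (((hmpfst.integrable_comp hI1.aestronglyMeasurable).2 hI1)).const_mul _
    have c2 : Integrable (fun p : Ω × Ω => (2 * β j) * (u p.1 * x j p.2)) (μ.prod μ) :=
      (hui.mul_prod (hxi j)).const_mul _
    have c3 : Integrable (fun p : Ω × Ω => (β j ^ 2) * F3 p.1) (μ.prod μ) :=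
      (((hmpfst.integrable_comp hI3.aestronglyMeasurable).2 hI3)).const_mul _
    have c4 : Integrable (fun p : Ω × Ω => (β j ^ 2) * F3 p.2) (μ.prod μ) :=
      (((hmpsnd.integrable_comp hI3.aestronglyMeasurable).2 hI3)).const_mul _
    have c5 : Integrable (fun p : Ω × Ω => (2 * β j) * (x j p.1 * w p.2)) (μ.prod μ) :=
      ((hxi j).mul_prod hwi).const_mul _
    have c6 : Integrable (fun p : Ω × Ω => (2 * β j) * F6 p.2) (μ.prod μ) :=
      (((hmpsnd.integrable_comp hI6.aestronglyMeasurable).2 hI6)).const_mul _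
    have d12 : Integrable (fun p : Ω × Ω => (2 * β j) * F1 p.1
        - (2 * β j) * (u p.1 * x j p.2)) (μ.prod μ) := c1.sub c2
    have d123 : Integrable (fun p : Ω × Ω => (2 * β j) * F1 p.1
        - (2 * β j) * (u p.1 * x j p.2) - (β j ^ 2) * F3 p.1) (μ.prod μ) := d12.sub c3
    have d1234 : Integrable (fun p : Ω × Ω => (2 * β j) * F1 p.1
        - (2 * β j) * (u p.1 * x j p.2) - (β j ^ 2) * F3 p.1 + (β j ^ 2) * F3 p.2)
        (μ.prod μ) := d123.add c4
    have d12345 : Integrable (fun p : Ω × Ω => (2 * β j) * F1 p.1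
        - (2 * β j) * (u p.1 * x j p.2) - (β j ^ 2) * F3 p.1 + (β j ^ 2) * F3 p.2
        - (2 * β j) * (x j p.1 * w p.2)) (μ.prod μ) := d1234.sub c5
    rw [integral_add d12345 c6, integral_sub d1234 c5, integral_add d123 c4,
      integral_sub d12 c3, integral_sub c1 c2,
      integral_const_mul, integral_const_mul, integral_const_mul, integral_const_mul,
      integral_const_mul, integral_const_mul,
      hfst_int F1, hfst_int F3, hsnd_int F3, hsnd_int F6,
      integral_prod_mul u (x j), integral_prod_mul (x j) w]
    -- scalar computations
    have hcov_y : cov μ y (x j) = (∫ ω, y ω * x j ω ∂μ) - (∫ ω, y ω ∂μ) * ∫ ω, x j ω ∂μ :=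
      cov_eq_sub hy (hx j)
    have hxkxj : ∀ k, k ≠ j → ∫ ω, x k ω * x j ω ∂μ = (∫ ω, x k ω ∂μ) * ∫ ω, x j ω ∂μ := by
      intro k hk
      have h := cov_eq_sub (hx k) (hx j)
      rw [huncorr k j hk] at h
      linarith
    have hintsum : ∀ T : Finset (Fin q), Integrable (fun ω => ∑ k ∈ T, β k * x k ω) μ :=
      fun T => integrable_finset_sum _ fun k _ => (hxi k).const_mul (β k)
    have hintsum2 : ∀ T : Finset (Fin q),
        Integrable (fun ω => ∑ k ∈ T, β k * (x k ω * x j ω)) μ :=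
      fun T => integrable_finset_sum _ fun k _ => (hmul _ _ (hx k) (hx j)).const_mul (β k)
    have hsumval : ∀ T : Finset (Fin q), (∀ k ∈ T, k ≠ j) →
        ∫ ω, (∑ k ∈ T, β k * (x k ω * x j ω)) ∂μ
          = (∑ k ∈ T, β k * ∫ ω, x k ω ∂μ) * ∫ ω, x j ω ∂μ := by
      intro T hT
      rw [integral_finset_sum _ fun k _ => (hmul _ _ (hx k) (hx j)).const_mul (β k),
        Finset.sum_mul]
      refine Finset.sum_congr rfl fun k hk => ?_
      rw [integral_const_mul, hxkxj k (hT k hk)]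
      ring
    have hF1val : ∫ ω, F1 ω ∂μ = (∫ ω, y ω * x j ω ∂μ)
        - (∑ k ∈ S, β k * ∫ ω, x k ω ∂μ) * ∫ ω, x j ω ∂μ := by
      have heq : F1 = fun ω => y ω * x j ω - ∑ k ∈ S, β k * (x k ω * x j ω) := by
        rw [hF1]; funext ω; simp only [hu]
        rw [sub_mul, Finset.sum_mul]
        congr 1
        exact Finset.sum_congr rfl fun k _ => by ring
      rw [heq, integral_sub (hmul _ _ hy (hx j)) (hintsum2 S),
        hsumval S fun k hk => fun h => hjS (h ▸ hk)]
    have hF6val : ∫ ω, F6 ω ∂μ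
        = (∑ k ∈ (Finset.univ.erase j) \ S, β k * ∫ ω, x k ω ∂μ) * ∫ ω, x j ω ∂μ := by
      have heq : F6 = fun ω => ∑ k ∈ (Finset.univ.erase j) \ S, β k * (x k ω * x j ω) := by
        rw [hF6]; funext ω; simp only [hw]
        rw [Finset.sum_mul]
        exact Finset.sum_congr rfl fun k _ => by ring
      rw [heq]
      exact hsumval _ fun k hk => (Finset.mem_erase.1 (Finset.mem_sdiff.1 hk).1).1
    have huval : ∫ ω, u ω ∂μ = (∫ ω, y ω ∂μ) - ∑ k ∈ S, β k * ∫ ω, x k ω ∂μ := by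
      simp only [hu]
      rw [integral_sub hyi (hintsum S), integral_finset_sum _ fun k _ => (hxi k).const_mul (β k)]
      congr 1
      exact Finset.sum_congr rfl fun k _ => integral_const_mul _ _
    have hwval : ∫ ω, w ω ∂μ = ∑ k ∈ (Finset.univ.erase j) \ S, β k * ∫ ω, x k ω ∂μ := by
      simp only [hw]
      rw [integral_finset_sum _ fun k _ => (hxi k).const_mul (β k)]
      exact Finset.sum_congr rfl fun k _ => integral_const_mul _ _
    rw [hF1val, hF6val, huval, hwval, hcov_y]
    ring
  rw [xper]
  rw [Finset.sum_congr rfl fun S hS => by rw [key S hS]]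
  rw [← Finset.sum_mul, shapley_sum q j, one_mul]
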